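/- Cauchy indices along subpaths combine: if γ : [0,1] → ℂ is a continuous path with finitely many real-part-constancy segments with respect to z₀, and 0 ≤ a ≤ b ≤ c ≤ 1, then cindex_pathE (subpath a b γ) z₀ + cindex_pathE (subpath b c γ) z₀ = cindex_pathE (subpath a c γ) z₀. -/

import Mathlib

open Complex Filter Topology Polynomial Set

open Classical in
noncomputable def jumpF (f : ℝ → ℝ) (F : Filter ℝ) : ℝ :=
  if Tendsto f F atTop then 1/2 else if Tendsto f F atBot then -1/2 else 0

noncomputable def cindexE (a b : ℝ) (f : ℝ → ℝ) : ℝ :=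
  (∑ᶠ x ∈ {x : ℝ | jumpF f (𝓝[>] x) ≠ 0 ∧ a ≤ x ∧ x < b}, jumpF f (𝓝[>] x)) -
  (∑ᶠ x ∈ {x : ℝ | jumpF f (𝓝[<] x) ≠ 0 ∧ a < x ∧ x ≤ b}, jumpF f (𝓝[<] x))

noncomputable def cindexPathE (γ : ℝ → ℂ) (z : ℂ) : ℝ :=
  cindexE 0 1 fun t => (γ t - z).im / (γ t - z).re

/-- A predicate `P` admits a finite segmentation of `[a,b]`. -/
inductive FinitePsegments (P : ℝ → Prop) : ℝ → ℝ → Prop where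
  | emptyI (a b : ℝ) (hab : b ≤ a) : FinitePsegments P a b
  | insertI_1 (a b s : ℝ) (hs : s ∈ Set.Ico a b) (h0 : s = a ∨ P s)
      (hP : ∀ t ∈ Set.Ioo s b, P t) (hrec : FinitePsegments P a s) :
      FinitePsegments P a b
  | insertI_2 (a b s : ℝ) (hs : s ∈ Set.Ico a b) (h0 : s = a ∨ P s)
      (hP : ∀ t ∈ Set.Ioo s b, ¬ P t) (hrec : FinitePsegments P a s) :
      FinitePsegments P a b

/-- `[0,1]` decomposes into finitely many consecutive subintervals on each of whose
interiors `Re (γ t - z) = 0` holds identically or fails identically. -/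
def finiteReZSegments (γ : ℝ → ℂ) (z : ℂ) : Prop :=
  FinitePsegments (fun t => (γ t - z).re = 0) 0 1

noncomputable def subpath (a b : ℝ) (γ : ℝ → ℂ) : ℝ → ℂ :=
  fun t => γ ((b - a) * t + a)

/-! ### Auxiliary lemmas -/

lemma map_affine_nhdsGT (k c : ℝ) (hk : 0 < k) (x : ℝ) :
    Filter.map (fun t => k * t + c) (𝓝[>] x) = 𝓝[>] (k * x + c) := by
  have him : (fun t : ℝ => k * t + c) '' Ioi x = Ioi (k * x + c) := by
    ext y
    constructor
    · rintro ⟨t, ht, rfl⟩; simp only [mem_Ioi] at *; nlinarith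
    · intro hy
      refine ⟨(y - c)/k, ?_, by field_simp; ring⟩
      simp only [mem_Ioi] at *
      rw [lt_div_iff₀ hk]; nlinarith
  have h2 := ((Homeomorph.mulLeft₀ k hk.ne').trans
      (Homeomorph.addRight c)).isEmbedding.map_nhdsWithin_eq (Ioi x) x
  have hco : ⇑((Homeomorph.mulLeft₀ k hk.ne').trans (Homeomorph.addRight c))
      = fun t : ℝ => k * t + c := rfl
  rw [hco, him] at h2
  exact h2

lemma map_affine_nhdsLT (k c : ℝ) (hk : 0 < k) (x : ℝ) :
    Filter.map (fun t => k * t + c) (𝓝[<] x) = 𝓝[<] (k * x + c) := by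
  have him : (fun t : ℝ => k * t + c) '' Iio x = Iio (k * x + c) := by
    ext y
    constructor
    · rintro ⟨t, ht, rfl⟩; simp only [mem_Iio] at *; nlinarith
    · intro hy
      refine ⟨(y - c)/k, ?_, by field_simp; ring⟩
      simp only [mem_Iio] at *
      rw [div_lt_iff₀ hk]; nlinarith
  have h2 := ((Homeomorph.mulLeft₀ k hk.ne').trans
      (Homeomorph.addRight c)).isEmbedding.map_nhdsWithin_eq (Iio x) x
  have hco : ⇑((Homeomorph.mulLeft₀ k hk.ne').trans (Homeomorph.addRight c))
      = fun t : ℝ => k * t + c := rfl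
  rw [hco, him] at h2
  exact h2

lemma jumpF_comp (f h : ℝ → ℝ) (l l' : Filter ℝ) (hm : Filter.map h l = l') :
    jumpF (fun t => f (h t)) l = jumpF f l' := by
  subst hm
  have h1 : Tendsto (fun t => f (h t)) l atTop ↔ Tendsto f (Filter.map h l) atTop :=
    tendsto_map'_iff.symm
  have h2 : Tendsto (fun t => f (h t)) l atBot ↔ Tendsto f (Filter.map h l) atBot :=
    tendsto_map'_iff.symm
  classical
  simp only [jumpF]
  exact if_congr h1 rfl (if_congr h2 rfl rfl)

lemma jumpF_eq_zero_of_tendsto {f : ℝ → ℝ} {l : Filter ℝ} {c : ℝ} [l.NeBot]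
    (h : Tendsto f l (𝓝 c)) : jumpF f l = 0 := by
  unfold jumpF
  rw [if_neg (not_tendsto_atTop_of_tendsto_nhds h),
    if_neg (not_tendsto_atBot_of_tendsto_nhds h)]

lemma jumpF_const (c : ℝ) (l : Filter ℝ) [l.NeBot] : jumpF (fun _ => c) l = 0 :=
  jumpF_eq_zero_of_tendsto tendsto_const_nhds

lemma cindexE_const (a b c : ℝ) : cindexE a b (fun _ => c) = 0 := by
  unfold cindexE
  have h1 : {x : ℝ | jumpF (fun _ => c) (𝓝[>] x) ≠ 0 ∧ a ≤ x ∧ x < b} = ∅ := by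
    ext x; simp [jumpF_const]
  have h2 : {x : ℝ | jumpF (fun _ => c) (𝓝[<] x) ≠ 0 ∧ a < x ∧ x ≤ b} = ∅ := by
    ext x; simp [jumpF_const]
  rw [h1, h2]; simp

lemma cindexE_self (a : ℝ) (f : ℝ → ℝ) : cindexE a a f = 0 := by
  unfold cindexE
  have h1 : {x : ℝ | jumpF f (𝓝[>] x) ≠ 0 ∧ a ≤ x ∧ x < a} = ∅ := by
    ext x; simp only [mem_setOf_eq, mem_empty_iff_false, iff_false]
    rintro ⟨_, h1, h2⟩; linarith
  have h2 : {x : ℝ | jumpF f (𝓝[<] x) ≠ 0 ∧ a < x ∧ x ≤ a} = ∅ := by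
    ext x; simp only [mem_setOf_eq, mem_empty_iff_false, iff_false]
    rintro ⟨_, h1, h2⟩; linarith
  rw [h1, h2]; simp

lemma cindexE_affine (f : ℝ → ℝ) (a b : ℝ) (hab : a < b) :
    cindexE 0 1 (fun t => f ((b - a) * t + a)) = cindexE a b f := by
  set k := b - a with hk_def
  have hk : 0 < k := sub_pos.mpr hab
  have keyR : ∀ x : ℝ, jumpF (fun t => f (k * t + a)) (𝓝[>] x) = jumpF f (𝓝[>] (k * x + a)) :=
    fun x => jumpF_comp f _ _ _ (map_affine_nhdsGT k a hk x)
  have keyL : ∀ x : ℝ, jumpF (fun t => f (k * t + a)) (𝓝[<] x) = jumpF f (𝓝[<] (k * x + a)) :=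
    fun x => jumpF_comp f _ _ _ (map_affine_nhdsLT k a hk x)
  have hinj : Function.Injective (fun x : ℝ => k * x + a) := by
    intro x y hxy
    simp only at hxy
    have : k * x = k * y := by linarith
    exact mul_left_cancel₀ hk.ne' this
  have himR : (fun x : ℝ => k * x + a) '' {x : ℝ | jumpF f (𝓝[>] (k * x + a)) ≠ 0 ∧ 0 ≤ x ∧ x < 1}
      = {y : ℝ | jumpF f (𝓝[>] y) ≠ 0 ∧ a ≤ y ∧ y < b} := by
    ext y
    simp only [mem_image, mem_setOf_eq]
    constructor
    · rintro ⟨x, ⟨hj, hx0, hx1⟩, rfl⟩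
      refine ⟨hj, ?_, ?_⟩
      · nlinarith [mul_nonneg hk.le hx0]
      · nlinarith [mul_pos hk (show (0:ℝ) < 1 - x by linarith)]
    · rintro ⟨hj, hy0, hy1⟩
      have hyy : k * ((y - a)/k) + a = y := by field_simp; ring
      refine ⟨(y - a)/k, ⟨?_, ?_, ?_⟩, hyy⟩
      · rw [hyy]; exact hj
      · exact div_nonneg (by linarith) hk.le
      · rw [div_lt_one hk]; rw [hk_def]; linarith
  have himL : (fun x : ℝ => k * x + a) '' {x : ℝ | jumpF f (𝓝[<] (k * x + a)) ≠ 0 ∧ 0 < x ∧ x ≤ 1}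
      = {y : ℝ | jumpF f (𝓝[<] y) ≠ 0 ∧ a < y ∧ y ≤ b} := by
    ext y
    simp only [mem_image, mem_setOf_eq]
    constructor
    · rintro ⟨x, ⟨hj, hx0, hx1⟩, rfl⟩
      refine ⟨hj, ?_, ?_⟩
      · nlinarith [mul_pos hk hx0]
      · nlinarith [mul_nonneg hk.le (show (0:ℝ) ≤ 1 - x by linarith)]
    · rintro ⟨hj, hy0, hy1⟩
      have hyy : k * ((y - a)/k) + a = y := by field_simp; ring
      refine ⟨(y - a)/k, ⟨?_, ?_, ?_⟩, hyy⟩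
      · rw [hyy]; exact hj
      · exact div_pos (by linarith) hk
      · rw [div_le_one hk]; rw [hk_def]; linarith
  unfold cindexE
  congr 1
  · calc (∑ᶠ x ∈ {x : ℝ | jumpF (fun t => f (k * t + a)) (𝓝[>] x) ≠ 0 ∧ 0 ≤ x ∧ x < 1},
        jumpF (fun t => f (k * t + a)) (𝓝[>] x))
        = ∑ᶠ x ∈ {x : ℝ | jumpF f (𝓝[>] (k * x + a)) ≠ 0 ∧ 0 ≤ x ∧ x < 1},
            jumpF f (𝓝[>] (k * x + a)) := by simp only [keyR]
      _ = ∑ᶠ y ∈ (fun x : ℝ => k * x + a) ''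
            {x : ℝ | jumpF f (𝓝[>] (k * x + a)) ≠ 0 ∧ 0 ≤ x ∧ x < 1}, jumpF f (𝓝[>] y) :=
          (finsum_mem_image (f := fun y => jumpF f (𝓝[>] y)) (g := fun x : ℝ => k * x + a)
            (s := {x : ℝ | jumpF f (𝓝[>] (k * x + a)) ≠ 0 ∧ 0 ≤ x ∧ x < 1})
            hinj.injOn).symm
      _ = ∑ᶠ y ∈ {y : ℝ | jumpF f (𝓝[>] y) ≠ 0 ∧ a ≤ y ∧ y < b}, jumpF f (𝓝[>] y) := by
          rw [himR]
  · calc (∑ᶠ x ∈ {x : ℝ | jumpF (fun t => f (k * t + a)) (𝓝[<] x) ≠ 0 ∧ 0 < x ∧ x ≤ 1},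
        jumpF (fun t => f (k * t + a)) (𝓝[<] x))
        = ∑ᶠ x ∈ {x : ℝ | jumpF f (𝓝[<] (k * x + a)) ≠ 0 ∧ 0 < x ∧ x ≤ 1},
            jumpF f (𝓝[<] (k * x + a)) := by simp only [keyL]
      _ = ∑ᶠ y ∈ (fun x : ℝ => k * x + a) ''
            {x : ℝ | jumpF f (𝓝[<] (k * x + a)) ≠ 0 ∧ 0 < x ∧ x ≤ 1}, jumpF f (𝓝[<] y) :=
          (finsum_mem_image (f := fun y => jumpF f (𝓝[<] y)) (g := fun x : ℝ => k * x + a)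
            (s := {x : ℝ | jumpF f (𝓝[<] (k * x + a)) ≠ 0 ∧ 0 < x ∧ x ≤ 1})
            hinj.injOn).symm
      _ = ∑ᶠ y ∈ {y : ℝ | jumpF f (𝓝[<] y) ≠ 0 ∧ a < y ∧ y ≤ b}, jumpF f (𝓝[<] y) := by
          rw [himL]

lemma cindexE_combine (f : ℝ → ℝ) (a b c : ℝ) (hab : a ≤ b) (hbc : b ≤ c)
    (h1 : {x : ℝ | jumpF f (𝓝[>] x) ≠ 0 ∧ a ≤ x ∧ x < c}.Finite)
    (h2 : {x : ℝ | jumpF f (𝓝[<] x) ≠ 0 ∧ a < x ∧ x ≤ c}.Finite) :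
    cindexE a b f + cindexE b c f = cindexE a c f := by
  have e1 : {x : ℝ | jumpF f (𝓝[>] x) ≠ 0 ∧ a ≤ x ∧ x < c}
      = {x : ℝ | jumpF f (𝓝[>] x) ≠ 0 ∧ a ≤ x ∧ x < b}
        ∪ {x : ℝ | jumpF f (𝓝[>] x) ≠ 0 ∧ b ≤ x ∧ x < c} := by
    ext x
    simp only [mem_setOf_eq, mem_union]
    constructor
    · rintro ⟨h, ha, hc⟩
      rcases lt_or_ge x b with hb | hb
      · exact Or.inl ⟨h, ha, hb⟩
      · exact Or.inr ⟨h, hb, hc⟩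
    · rintro (⟨h, ha, hb⟩ | ⟨h, hb, hc⟩)
      · exact ⟨h, ha, hb.trans_le hbc⟩
      · exact ⟨h, hab.trans hb, hc⟩
  have e2 : {x : ℝ | jumpF f (𝓝[<] x) ≠ 0 ∧ a < x ∧ x ≤ c}
      = {x : ℝ | jumpF f (𝓝[<] x) ≠ 0 ∧ a < x ∧ x ≤ b}
        ∪ {x : ℝ | jumpF f (𝓝[<] x) ≠ 0 ∧ b < x ∧ x ≤ c} := by
    ext x
    simp only [mem_setOf_eq, mem_union]
    constructor
    · rintro ⟨h, ha, hc⟩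
      rcases le_or_gt x b with hb | hb
      · exact Or.inl ⟨h, ha, hb⟩
      · exact Or.inr ⟨h, hb, hc⟩
    · rintro (⟨h, ha, hb⟩ | ⟨h, hb, hc⟩)
      · exact ⟨h, ha, hb.trans hbc⟩
      · exact ⟨h, hab.trans_lt hb, hc⟩
  have d1 : Disjoint {x : ℝ | jumpF f (𝓝[>] x) ≠ 0 ∧ a ≤ x ∧ x < b}
      {x : ℝ | jumpF f (𝓝[>] x) ≠ 0 ∧ b ≤ x ∧ x < c} := by
    rw [Set.disjoint_left]
    rintro x ⟨_, _, hb⟩ ⟨_, hb', _⟩; linarith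
  have d2 : Disjoint {x : ℝ | jumpF f (𝓝[<] x) ≠ 0 ∧ a < x ∧ x ≤ b}
      {x : ℝ | jumpF f (𝓝[<] x) ≠ 0 ∧ b < x ∧ x ≤ c} := by
    rw [Set.disjoint_left]
    rintro x ⟨_, _, hb⟩ ⟨_, hb', _⟩; linarith
  rw [e1] at h1; rw [e2] at h2
  unfold cindexE
  rw [e1, e2, finsum_mem_union d1 (h1.subset subset_union_left) (h1.subset subset_union_right),
    finsum_mem_union d2 (h2.subset subset_union_left) (h2.subset subset_union_right)]
  ring

lemma finitePsegments_interior {P : ℝ → Prop} {a b : ℝ} (h : FinitePsegments P a b) :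
    ∃ S : Finset ℝ, ∀ x ∈ Ioo a b, x ∉ S →
      ∃ u v, u < x ∧ x < v ∧ ((∀ t ∈ Ioo u v, P t) ∨ (∀ t ∈ Ioo u v, ¬ P t)) := by
  induction h with
  | emptyI b hab =>
      exact ⟨∅, fun x hx _ => absurd hx (by rw [Ioo_eq_empty (by linarith)]; simp)⟩
  | insertI_1 b s hs h0 hP hrec ih =>
      obtain ⟨S, hS⟩ := ih
      refine ⟨insert s S, fun x hx hxS => ?_⟩
      rcases lt_trichotomy x s with h | h | h
      · exact hS x ⟨hx.1, h⟩ (fun hmem => hxS (Finset.mem_insert_of_mem hmem))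
      · exact absurd (Finset.mem_insert_self s S) (h ▸ hxS)
      · exact ⟨s, b, h, hx.2, Or.inl hP⟩
  | insertI_2 b s hs h0 hP hrec ih =>
      obtain ⟨S, hS⟩ := ih
      refine ⟨insert s S, fun x hx hxS => ?_⟩
      rcases lt_trichotomy x s with h | h | h
      · exact hS x ⟨hx.1, h⟩ (fun hmem => hxS (Finset.mem_insert_of_mem hmem))
      · exact absurd (Finset.mem_insert_self s S) (h ▸ hxS)
      · exact ⟨s, b, h, hx.2, Or.inr hP⟩

lemma jump_sets_finite (γ : ℝ → ℂ) (z₀ : ℂ) (hseg : finiteReZSegments γ z₀)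
    (hpath : ContinuousOn γ (Icc 0 1)) :
    {x : ℝ | jumpF (fun t => (γ t - z₀).im / (γ t - z₀).re) (𝓝[>] x) ≠ 0
        ∧ 0 ≤ x ∧ x < 1}.Finite ∧
    {x : ℝ | jumpF (fun t => (γ t - z₀).im / (γ t - z₀).re) (𝓝[<] x) ≠ 0
        ∧ 0 < x ∧ x ≤ 1}.Finite := by
  set f : ℝ → ℝ := fun t => (γ t - z₀).im / (γ t - z₀).re with hf
  obtain ⟨S, hS⟩ := finitePsegments_interior hseg
  have key : ∀ x ∈ Ioo (0:ℝ) 1, x ∉ S → jumpF f (𝓝[>] x) = 0 ∧ jumpF f (𝓝[<] x) = 0 := by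
    intro x hx hxS
    obtain ⟨u, v, hu, hv, hcase⟩ := hS x hx hxS
    rcases hcase with hP | hP
    · -- Re = 0 on Ioo u v, so f = 0 there
      have hzero : ∀ t ∈ Ioo u v, f t = 0 := by
        intro t ht
        simp only [hf]
        rw [hP t ht, div_zero]
      constructor
      · refine jumpF_eq_zero_of_tendsto (c := 0) ?_
        have hev : f =ᶠ[𝓝[>] x] (fun _ => 0) := by
          filter_upwards [Ioo_mem_nhdsGT_of_mem ⟨le_refl x, hv⟩] with t ht
          exact hzero t ⟨hu.trans ht.1, ht.2⟩
        exact Tendsto.congr' hev.symm tendsto_const_nhds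
      · refine jumpF_eq_zero_of_tendsto (c := 0) ?_
        have hev : f =ᶠ[𝓝[<] x] (fun _ => 0) := by
          filter_upwards [Ioo_mem_nhdsLT_of_mem ⟨hu, le_refl x⟩] with t ht
          exact hzero t ⟨ht.1, ht.2.trans hv⟩
        exact Tendsto.congr' hev.symm tendsto_const_nhds
    · -- Re ≠ 0 on Ioo u v, in particular at x
      have hre : (γ x - z₀).re ≠ 0 := hP x ⟨hu, hv⟩
      have hcx : ContinuousWithinAt γ (Icc 0 1) x :=
        hpath x ⟨hx.1.le, hx.2.le⟩
      constructor
      · have hle : 𝓝[>] x ≤ 𝓝[Icc (0:ℝ) 1] x := by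
          rw [nhdsWithin_le_iff]
          exact mem_of_superset (Ioc_mem_nhdsGT_of_mem ⟨le_refl x, hx.2⟩)
            (fun t ht => ⟨hx.1.le.trans ht.1.le, ht.2⟩)
        have hγ : Tendsto γ (𝓝[>] x) (𝓝 (γ x)) := hcx.mono_left hle
        have hsub : Tendsto (fun t => γ t - z₀) (𝓝[>] x) (𝓝 (γ x - z₀)) :=
          hγ.sub tendsto_const_nhds
        have him := (Complex.continuous_im.tendsto _).comp hsub
        have hre2 := (Complex.continuous_re.tendsto _).comp hsub
        exact jumpF_eq_zero_of_tendsto (him.div hre2 hre)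
      · have hle : 𝓝[<] x ≤ 𝓝[Icc (0:ℝ) 1] x := by
          rw [nhdsWithin_le_iff]
          exact mem_of_superset (Ico_mem_nhdsLT_of_mem ⟨hx.1, le_refl x⟩)
            (fun t ht => ⟨ht.1, ht.2.le.trans hx.2.le⟩)
        have hγ : Tendsto γ (𝓝[<] x) (𝓝 (γ x)) := hcx.mono_left hle
        have hsub : Tendsto (fun t => γ t - z₀) (𝓝[<] x) (𝓝 (γ x - z₀)) :=
          hγ.sub tendsto_const_nhds
        have him := (Complex.continuous_im.tendsto _).comp hsub
        have hre2 := (Complex.continuous_re.tendsto _).comp hsub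
        exact jumpF_eq_zero_of_tendsto (him.div hre2 hre)
  constructor
  · refine Set.Finite.subset (Set.Finite.insert 0 S.finite_toSet) ?_
    rintro x ⟨hj, hx0, hx1⟩
    rcases eq_or_lt_of_le hx0 with h | h
    · exact mem_insert_iff.mpr (Or.inl h.symm)
    · by_cases hxS : x ∈ S
      · exact mem_insert_iff.mpr (Or.inr hxS)
      · exact absurd (key x ⟨h, hx1⟩ hxS).1 hj
  · refine Set.Finite.subset (Set.Finite.insert 1 S.finite_toSet) ?_
    rintro x ⟨hj, hx0, hx1⟩
    rcases eq_or_lt_of_le hx1 with h | h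
    · exact mem_insert_iff.mpr (Or.inl h)
    · by_cases hxS : x ∈ S
      · exact mem_insert_iff.mpr (Or.inr hxS)
      · exact absurd (key x ⟨hx0, h⟩ hxS).2 hj

theorem cindex_pathE_subpath_combine (γ : ℝ → ℂ) (z₀ : ℂ) (a b c : ℝ)
    (hseg : finiteReZSegments γ z₀) (hpath : ContinuousOn γ (Set.Icc 0 1))
    (h0 : 0 ≤ a) (hab : a ≤ b) (hbc : b ≤ c) (hc : c ≤ 1) :
    cindexPathE (subpath a b γ) z₀ + cindexPathE (subpath b c γ) z₀
      = cindexPathE (subpath a c γ) z₀ := by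
  set f : ℝ → ℝ := fun t => (γ t - z₀).im / (γ t - z₀).re with hf
  have heq : ∀ p q : ℝ, p ≤ q → cindexPathE (subpath p q γ) z₀ = cindexE p q f := by
    intro p q hpq
    rcases eq_or_lt_of_le hpq with h | h
    · subst h
      have hsp : subpath p p γ = fun _ => γ p := by
        funext t; simp [subpath]
      rw [hsp, cindexE_self]
      show cindexE 0 1 (fun t => ((γ p : ℂ) - z₀).im / ((γ p : ℂ) - z₀).re) = 0
      exact cindexE_const 0 1 _
    · show cindexE 0 1 (fun t => f ((q - p) * t + p)) = cindexE p q f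
      exact cindexE_affine f p q h
  rw [heq a b hab, heq b c hbc, heq a c (hab.trans hbc)]
  obtain ⟨hfin1, hfin2⟩ := jump_sets_finite γ z₀ hseg hpath
  refine cindexE_combine f a b c hab hbc ?_ ?_
  · refine hfin1.subset ?_
    rintro x ⟨hj, hx0, hx1⟩
    exact ⟨hj, h0.trans hx0, hx1.trans_le hc⟩
  · refine hfin2.subset ?_
    rintro x ⟨hj, hx0, hx1⟩
    exact ⟨hj, h0.trans_lt hx0, hx1.trans hc⟩
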